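/- Let u be the odometer of rotor aggregation of n particles in ℤ^d with a simple rotor mechanism, and define θ(x,y) = N(x,y) − N(y,x), where N(x,y) is the total number of particle moves from x to its neighbor y. Then for every directed edge (x,y), |u(x) − u(y) − 2d·θ(x,y)| ≤ 4d − 2. -/

import Mathlib

/-- The lattice `ℤᵈ`. -/
abbrev Vd (d : ℕ) := Fin d → ℤ

/-- The neighbor of `x` in direction `j = (i, b)`: `x + eᵢ` if `b`, else `x − eᵢ`. -/
def nbr {d : ℕ} (x : Vd d) (j : Fin d × Bool) : Vd d :=
  if j.2 then x + Pi.single j.1 1 else x - Pi.single j.1 1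

/-- The graph Laplacian on `ℤᵈ`: `Δf(x) = Σ_{y ∼ x} (f(y) − f(x))`. -/
def lapd {d : ℕ} (f : Vd d → ℝ) (x : Vd d) : ℝ :=
  ∑ j : Fin d × Bool, (f (nbr x j) - f x)

/-- A configuration during rotor aggregation: the rotor directions (as indices into each
vertex's periodic mechanism), the set of occupied sites, and the current walker (if any). -/
structure RConf (d : ℕ) where
  rotors : Vd d → ZMod (2 * d)
  occ : Finset (Vd d)
  walker : Option (Vd d)

/-- One step of rotor aggregation with mechanism `mech`: launch a new particle at the
origin, settle the walker at an unoccupied site, or advance the rotor at the walker's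
(occupied) site and move the walker to the neighbor it now points to. -/
inductive RStep {d : ℕ} (mech : Vd d → ZMod (2 * d) → Fin d × Bool) :
    RConf d → RConf d → Prop
  | launch (c : RConf d) (h : c.walker = none) :
      RStep mech c ⟨c.rotors, c.occ, some 0⟩
  | settle (c : RConf d) (p : Vd d) (h : c.walker = some p) (hp : p ∉ c.occ) :
      RStep mech c ⟨c.rotors, insert p c.occ, none⟩
  | move (c : RConf d) (p : Vd d) (h : c.walker = some p) (hp : p ∈ c.occ) :
      RStep mech c ⟨Function.update c.rotors p (c.rotors p + 1), c.occ,
        some (nbr p (mech p (c.rotors p + 1)))⟩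

/-- A complete execution of rotor aggregation of `n` particles started at the origin of
`ℤᵈ`, with rotor mechanism `mech` and initial rotor configuration `r₀`. -/
structure RotorExec (d n : ℕ) (mech : Vd d → ZMod (2 * d) → Fin d × Bool)
    (r₀ : Vd d → ZMod (2 * d)) where
  T : ℕ
  conf : ℕ → RConf d
  init : conf 0 = ⟨r₀, ∅, none⟩
  step : ∀ i < T, RStep mech (conf i) (conf (i + 1))
  walker_final : (conf T).walker = none
  card_final : (conf T).occ.card = n

/-- A rotor mechanism is simple if each of the `2d` neighbors occurs exactly once per
period. -/
def SimpleMech {d : ℕ} (mech : Vd d → ZMod (2 * d) → Fin d × Bool) : Prop :=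
  ∀ v, Function.Bijective (mech v)

variable {d n : ℕ} {mech : Vd d → ZMod (2 * d) → Fin d × Bool} {r₀ : Vd d → ZMod (2 * d)}

/-- The final cluster `Rₙ` of occupied sites. -/
def RotorExec.cluster (E : RotorExec d n mech r₀) : Finset (Vd d) := (E.conf E.T).occ

/-- The odometer: total number of exits from `x` by all particles. -/
def RotorExec.u (E : RotorExec d n mech r₀) (x : Vd d) : ℕ :=
  ((Finset.range E.T).filter
    (fun i => (E.conf i).walker = some x ∧ x ∈ (E.conf i).occ)).card

/-- `N(x,y)`: total number of particle moves from `x` to `y`. -/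
def RotorExec.N (E : RotorExec d n mech r₀) (x y : Vd d) : ℕ :=
  ((Finset.range E.T).filter (fun i => (E.conf i).walker = some x ∧
    x ∈ (E.conf i).occ ∧ (E.conf (i + 1)).walker = some y)).card

/-- `θ(x,y) = N(x,y) − N(y,x)`: net number of crossings of the directed edge `(x,y)`. -/
def RotorExec.theta (E : RotorExec d n mech r₀) (x y : Vd d) : ℤ :=
  (E.N x y : ℤ) - (E.N y x : ℤ)

-- ### Auxiliary development for the proof
namespace RotorProofAux

lemma nbr_inj {d : ℕ} (x : Vd d) : Function.Injective (nbr x) := by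
  rintro ⟨i, b⟩ ⟨i', b'⟩ h
  have h1 := congrFun h i
  have h2 := congrFun h i'
  by_cases hii : i = i'
  · subst hii
    cases b <;> cases b' <;>
      simp only [nbr, Bool.false_eq_true, if_true, if_false, Pi.add_apply, Pi.sub_apply,
        Pi.single_apply, if_pos rfl] at h1 ⊢ <;> omega
  · exfalso
    cases b <;> cases b' <;>
      simp only [nbr, Bool.false_eq_true, if_true, if_false, Pi.add_apply, Pi.sub_apply,
        Pi.single_apply, if_pos rfl, if_neg hii, if_neg (Ne.symm hii)] at h1 h2 <;> omega

lemma nbr_nbr {d : ℕ} (x : Vd d) (j : Fin d × Bool) :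
    nbr (nbr x j) (j.1, !j.2) = x := by
  rcases j with ⟨i, b⟩
  cases b <;> simp [nbr]

/-- Rank-counting: filtering a finset of naturals by a predicate on ranks. -/
lemma count_rank (q : ℕ → Prop) [DecidablePred q] :
    ∀ (N : ℕ) (S : Finset ℕ), S.card = N →
      (S.filter (fun i => q ((S.filter (fun t => t < i)).card))).card
        = ((Finset.range N).filter q).card := by
  intro N
  induction N with
  | zero => intro S hS; simp [Finset.card_eq_zero.mp hS]
  | succ m ih =>
    intro S hS
    have hne : S.Nonempty := Finset.card_pos.mp (by omega)
    set M := S.max' hne with hMdef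
    have hM : M ∈ S := S.max'_mem hne
    set S' := S.erase M with hS'def
    have hcard' : S'.card = m := by rw [hS'def, Finset.card_erase_of_mem hM, hS]; rfl
    have hle : ∀ t ∈ S, t ≤ M := fun t ht => S.le_max' t ht
    have hfiltM : S.filter (fun t => t < M) = S' := by
      ext t
      simp only [Finset.mem_filter, hS'def, Finset.mem_erase]
      constructor
      · rintro ⟨ht, hlt⟩; exact ⟨by omega, ht⟩
      · rintro ⟨hne', ht⟩; exact ⟨ht, lt_of_le_of_ne (hle t ht) hne'⟩
    have hkey : ∀ i ∈ S', S.filter (fun t => t < i) = S'.filter (fun t => t < i) := by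
      intro i hi
      have hiM : i ≤ M := hle i (Finset.mem_of_mem_erase hi)
      have hiM' : i ≠ M := Finset.ne_of_mem_erase hi
      ext t
      simp only [Finset.mem_filter, hS'def, Finset.mem_erase]
      constructor
      · rintro ⟨ht, hlt⟩
        refine ⟨⟨?_, ht⟩, hlt⟩
        rintro rfl; omega
      · rintro ⟨⟨_, ht⟩, hlt⟩; exact ⟨ht, hlt⟩
    have hins : S = insert M S' := (Finset.insert_erase hM).symm
    have hMnot : M ∉ S' := Finset.notMem_erase _ _
    have hsplit : (S.filter (fun i => q ((S.filter (fun t => t < i)).card))).card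
        = (S'.filter (fun i => q ((S'.filter (fun t => t < i)).card))).card
          + (if q m then 1 else 0) := by
      conv_lhs => rw [hins]
      rw [Finset.filter_insert]
      have hqM : q ((S.filter (fun t => t < M)).card) ↔ q m := by
        rw [hfiltM, hcard']
      have hfc : S'.filter (fun i => q ((S.filter (fun t => t < i)).card))
          = S'.filter (fun i => q ((S'.filter (fun t => t < i)).card)) := by
        apply Finset.filter_congr
        intro i hi
        rw [hkey i hi]
      split
      · rename_i hq
        rw [← hins] at hq ⊢
        rw [Finset.card_insert_of_notMem (fun hmem => hMnot (Finset.mem_of_mem_filter _ hmem)),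
          hfc, if_pos (hqM.mp hq)]
      · rename_i hq
        rw [← hins] at hq ⊢
        rw [hfc, if_neg (fun h => hq (hqM.mpr h))]; omega
    rw [hsplit, ih S' hcard', Finset.range_add_one, Finset.filter_insert]
    split
    · rw [Finset.card_insert_of_notMem (fun hmem => (Finset.notMem_range_self)
        (Finset.mem_of_mem_filter _ hmem))]
    · simp

section Cnt
variable {β : Type*} [DecidableEq β] {d : ℕ}

/-- count of hits of value `j` among `f (a + 0), ..., f (a + (m-1))` -/
def cnt (f : ZMod (2 * d) → β) (a : ZMod (2 * d)) (j : β) (m : ℕ) : ℕ :=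
  ((Finset.range m).filter (fun k : ℕ => f (a + (k : ZMod (2 * d))) = j)).card

lemma cnt_subset (hd : 0 < d) (f : ZMod (2 * d) → β) (hf : Function.Bijective f)
    (a : ZMod (2 * d)) (j : β) {m : ℕ} (hm : m ≤ 2 * d) :
    (Finset.range m).filter (fun k : ℕ => f (a + (k : ZMod (2 * d))) = j)
      ⊆ {((Equiv.ofBijective f hf).symm j - a).val} := by
  haveI : NeZero (2 * d) := ⟨by omega⟩
  intro k hk
  simp only [Finset.mem_filter, Finset.mem_range] at hk
  obtain ⟨hkm, hkj⟩ := hk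
  have : a + (k : ZMod (2 * d)) = (Equiv.ofBijective f hf).symm j := by
    apply hf.injective
    rw [hkj]
    exact ((Equiv.ofBijective f hf).apply_symm_apply j).symm
  have h2 : (k : ZMod (2 * d)) = (Equiv.ofBijective f hf).symm j - a := by
    rw [← this]; ring
  have h3 : ((k : ZMod (2 * d))).val = k := ZMod.val_cast_of_lt (by omega)
  simp only [Finset.mem_singleton]
  rw [← h3, h2]

lemma cnt_le_one (hd : 0 < d) (f : ZMod (2 * d) → β) (hf : Function.Bijective f)
    (a : ZMod (2 * d)) (j : β) {m : ℕ} (hm : m ≤ 2 * d) :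
    cnt f a j m ≤ 1 := by
  have := Finset.card_le_card (cnt_subset hd f hf a j hm)
  simpa [cnt] using this

lemma cnt_period (hd : 0 < d) (f : ZMod (2 * d) → β) (hf : Function.Bijective f)
    (a : ZMod (2 * d)) (j : β) :
    cnt f a j (2 * d) = 1 := by
  haveI : NeZero (2 * d) := ⟨by omega⟩
  have hsub := cnt_subset hd f hf a j (le_refl (2 * d))
  set k₀ := ((Equiv.ofBijective f hf).symm j - a).val with hk₀
  have hmem : k₀ ∈ (Finset.range (2 * d)).filter
      (fun k : ℕ => f (a + (k : ZMod (2 * d))) = j) := by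
    simp only [Finset.mem_filter, Finset.mem_range]
    refine ⟨ZMod.val_lt _, ?_⟩
    have : ((k₀ : ℕ) : ZMod (2 * d)) = (Equiv.ofBijective f hf).symm j - a :=
      ZMod.natCast_rightInverse _
    rw [this]
    have : a + ((Equiv.ofBijective f hf).symm j - a) = (Equiv.ofBijective f hf).symm j := by ring
    rw [this]
    exact (Equiv.ofBijective f hf).apply_symm_apply j
  have : (Finset.range (2 * d)).filter (fun k : ℕ => f (a + (k : ZMod (2 * d))) = j) = {k₀} :=
    Finset.Subset.antisymm hsub (Finset.singleton_subset_iff.mpr hmem)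
  simp [cnt, this]

lemma cnt_add (f : ZMod (2 * d) → β) (a : ZMod (2 * d)) (j : β) (m : ℕ) :
    cnt f a j (2 * d + m) = cnt f a j (2 * d) + cnt f a j m := by
  unfold cnt
  rw [Finset.range_add, Finset.filter_union,
    Finset.card_union_of_disjoint, Finset.filter_map, Finset.card_map]
  · congr 1
    refine congrArg Finset.card ?_
    apply Finset.filter_congr
    intro k _
    have hcast : (((2 * d + k : ℕ)) : ZMod (2 * d)) = (k : ZMod (2 * d)) := by
      rw [Nat.cast_add, ZMod.natCast_self, zero_add]
    simp [addLeftEmbedding_apply, hcast]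
  · rw [Finset.disjoint_left]
    intro t ht ht'
    have h1 : t < 2 * d := Finset.mem_range.mp (Finset.mem_of_mem_filter _ ht)
    have h2 := Finset.mem_of_mem_filter _ ht'
    simp only [Finset.mem_map, Finset.mem_range] at h2
    obtain ⟨k, _, hk⟩ := h2
    simp [addLeftEmbedding] at hk
    omega

lemma cnt_diff (hd : 0 < d) (f : ZMod (2 * d) → β) (hf : Function.Bijective f)
    (a : ZMod (2 * d)) (j j' : β) : ∀ m, cnt f a j m ≤ cnt f a j' m + 1 := by
  intro m
  induction m using Nat.strong_induction_on with
  | _ m ih =>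
    by_cases hm : 2 * d ≤ m
    · have hm' : m = 2 * d + (m - 2 * d) := by omega
      rw [hm', cnt_add, cnt_add, cnt_period hd f hf, cnt_period hd f hf]
      have := ih (m - 2 * d) (by omega)
      omega
    · have := cnt_le_one hd f hf a j (m := m) (by omega)
      omega

lemma cnt_sum (hd : 0 < d) [Fintype β] (f : ZMod (2 * d) → β) (a : ZMod (2 * d)) (m : ℕ) :
    ∑ j : β, cnt f a j m = m := by
  unfold cnt
  rw [← Finset.card_eq_sum_card_fiberwise (fun k _ => Finset.mem_univ _), Finset.card_range]

end Cnt

section Exec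
variable {d n : ℕ} {mech : Vd d → ZMod (2 * d) → Fin d × Bool} {r₀ : Vd d → ZMod (2 * d)}

lemma rstep_cases {c c' : RConf d} (h : RStep mech c c') :
    (c.walker = none ∧ c' = ⟨c.rotors, c.occ, some 0⟩) ∨
    (∃ p, c.walker = some p ∧ p ∉ c.occ ∧ c' = ⟨c.rotors, insert p c.occ, none⟩) ∨
    (∃ p, c.walker = some p ∧ p ∈ c.occ ∧
      c' = ⟨Function.update c.rotors p (c.rotors p + 1), c.occ,
        some (nbr p (mech p (c.rotors p + 1)))⟩) := by
  cases h with
  | launch h => exact Or.inl ⟨h, rfl⟩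
  | settle p h hp => exact Or.inr (Or.inl ⟨p, h, hp, rfl⟩)
  | move p h hp => exact Or.inr (Or.inr ⟨p, h, hp, rfl⟩)

/-- Number of exits from `x` strictly before time `i`. -/
def exits (E : RotorExec d n mech r₀) (x : Vd d) (i : ℕ) : ℕ :=
  ((Finset.range i).filter
    (fun t => (E.conf t).walker = some x ∧ x ∈ (E.conf t).occ)).card

lemma exits_succ (E : RotorExec d n mech r₀) (x : Vd d) (i : ℕ) :
    exits E x (i + 1) = exits E x i +
      (if (E.conf i).walker = some x ∧ x ∈ (E.conf i).occ then 1 else 0) := by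
  unfold exits
  rw [Finset.range_add_one, Finset.filter_insert]
  split
  · rw [Finset.card_insert_of_notMem
      (fun h => Finset.notMem_range_self (Finset.mem_of_mem_filter _ h))]
  · rw [Nat.add_zero]

lemma rotors_eq (E : RotorExec d n mech r₀) (x : Vd d) :
    ∀ i, i ≤ E.T → (E.conf i).rotors x = r₀ x + (exits E x i : ZMod (2 * d)) := by
  intro i
  induction i with
  | zero => intro _; simp [E.init, exits]
  | succ i ih =>
    intro hi
    have hi' : i < E.T := by omega
    have ih := ih (le_of_lt hi')
    rcases rstep_cases (E.step i hi') with ⟨hw, hc⟩ | ⟨p, hw, hp, hc⟩ | ⟨p, hw, hp, hc⟩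
    · have hcond : ¬((E.conf i).walker = some x ∧ x ∈ (E.conf i).occ) := by
        rintro ⟨h1, _⟩; rw [hw] at h1; exact nomatch h1
      rw [exits_succ, if_neg hcond, hc, ih]; simp
    · have hcond : ¬((E.conf i).walker = some x ∧ x ∈ (E.conf i).occ) := by
        rintro ⟨h1, h2⟩; rw [hw] at h1
        obtain rfl : p = x := Option.some_injective _ h1
        exact hp h2
      rw [exits_succ, if_neg hcond, hc, ih]; simp
    · by_cases hpx : p = x
      · subst hpx
        have hcond : (E.conf i).walker = some p ∧ p ∈ (E.conf i).occ := ⟨hw, hp⟩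
        rw [exits_succ, if_pos hcond, hc]
        show Function.update (E.conf i).rotors p ((E.conf i).rotors p + 1) p = _
        rw [Function.update_self, ih]
        push_cast
        ring
      · have hcond : ¬((E.conf i).walker = some x ∧ x ∈ (E.conf i).occ) := by
          rintro ⟨h1, _⟩; rw [hw] at h1
          exact hpx (Option.some_injective _ h1)
        rw [exits_succ, if_neg hcond, hc]
        show Function.update (E.conf i).rotors p ((E.conf i).rotors p + 1) x = _
        rw [Function.update_of_ne (fun h => hpx h.symm), ih]; simp

lemma exit_step (E : RotorExec d n mech r₀) (x : Vd d) {i : ℕ} (hi : i < E.T)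
    (hw : (E.conf i).walker = some x) (ho : x ∈ (E.conf i).occ) :
    (E.conf (i + 1)).walker =
      some (nbr x (mech x (r₀ x + (exits E x i : ZMod (2 * d)) + 1))) := by
  rcases rstep_cases (E.step i hi) with ⟨hw', _⟩ | ⟨p, hw', hp, _⟩ | ⟨p, hw', hp, hc⟩
  · rw [hw] at hw'; exact nomatch hw'
  · rw [hw] at hw'
    obtain rfl : x = p := Option.some_injective _ hw'
    exact absurd ho hp
  · rw [hw] at hw'
    obtain rfl : x = p := Option.some_injective _ hw'
    rw [hc]
    show some (nbr x (mech x ((E.conf i).rotors x + 1))) = _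
    rw [rotors_eq E x i (le_of_lt hi)]

/-- `N(x, nbr x j)` as a rotor-sequence count. -/
lemma N_formula (hd : 0 < d) (E : RotorExec d n mech r₀) (x : Vd d) (j : Fin d × Bool) :
    E.N x (nbr x j) = cnt (mech x) (r₀ x + 1) j (E.u x) := by
  classical
  set S := (Finset.range E.T).filter
    (fun i => (E.conf i).walker = some x ∧ x ∈ (E.conf i).occ) with hS
  have hcardS : S.card = E.u x := rfl
  have hfilt : ∀ i, i ≤ E.T → S.filter (fun t => t < i)
      = (Finset.range i).filter
        (fun t => (E.conf t).walker = some x ∧ x ∈ (E.conf t).occ) := by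
    intro i hi
    ext t
    simp only [hS, Finset.mem_filter, Finset.mem_range]
    constructor
    · rintro ⟨⟨_, hcond⟩, hlt⟩; exact ⟨hlt, hcond⟩
    · rintro ⟨hlt, hcond⟩; exact ⟨⟨by omega, hcond⟩, hlt⟩
  have step1 : E.N x (nbr x j)
      = (S.filter (fun i =>
          mech x (r₀ x + (exits E x i : ZMod (2 * d)) + 1) = j)).card := by
    unfold RotorExec.N
    rw [hS, Finset.filter_filter]
    refine congrArg Finset.card ?_
    apply Finset.filter_congr
    intro i hi
    have hiT : i < E.T := Finset.mem_range.mp hi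
    constructor
    · rintro ⟨h1, h2, h3⟩
      refine ⟨⟨h1, h2⟩, ?_⟩
      have := exit_step E x hiT h1 h2
      rw [this] at h3
      exact nbr_inj x (Option.some_injective _ h3)
    · rintro ⟨⟨h1, h2⟩, h3⟩
      refine ⟨h1, h2, ?_⟩
      rw [exit_step E x hiT h1 h2, h3]
  have step2 : (S.filter (fun i =>
        mech x (r₀ x + (exits E x i : ZMod (2 * d)) + 1) = j)).card
      = (S.filter (fun i =>
          mech x (r₀ x + ((S.filter (fun t => t < i)).card : ZMod (2 * d)) + 1) = j)).card := by
    refine congrArg Finset.card ?_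
    apply Finset.filter_congr
    intro i hi
    have hiT : i < E.T := Finset.mem_range.mp (Finset.mem_of_mem_filter _ hi)
    rw [hfilt i (le_of_lt hiT)]
    rfl
  rw [step1, step2,
    count_rank (fun k => mech x (r₀ x + (k : ZMod (2 * d)) + 1) = j) (E.u x) S hcardS]
  unfold cnt
  refine congrArg Finset.card ?_
  apply Finset.filter_congr
  intro k _
  have : r₀ x + (k : ZMod (2 * d)) + 1 = r₀ x + 1 + (k : ZMod (2 * d)) := by ring
  rw [this]

/-- One-vertex bound: `|u(x) − 2d·N(x, nbr x j)| ≤ 2d − 1`. -/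
lemma one_vertex_bound (hd : 0 < d) (hmech : SimpleMech mech)
    (E : RotorExec d n mech r₀) (x : Vd d) (j : Fin d × Bool) :
    |(E.u x : ℤ) - 2 * d * (E.N x (nbr x j) : ℤ)| ≤ 2 * d - 1 := by
  classical
  have hsum : ∑ j' : Fin d × Bool, cnt (mech x) (r₀ x + 1) j' (E.u x) = E.u x :=
    cnt_sum hd (mech x) (r₀ x + 1) (E.u x)
  rw [N_formula hd E x j]
  set m := E.u x
  set c : Fin d × Bool → ℕ := fun j' => cnt (mech x) (r₀ x + 1) j' m with hc
  have hcard : (Finset.univ : Finset (Fin d × Bool)).card = 2 * d := by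
    simp [Finset.card_univ, mul_comm]
  have hrw : (m : ℤ) - 2 * d * (c j : ℤ)
      = ∑ j' : Fin d × Bool, ((c j' : ℤ) - (c j : ℤ)) := by
    rw [Finset.sum_sub_distrib, Finset.sum_const, hcard]
    have : ((∑ j' : Fin d × Bool, c j' : ℕ) : ℤ) = (m : ℤ) := by
      exact_mod_cast congrArg (Nat.cast : ℕ → ℤ) hsum
    push_cast at this ⊢
    rw [this]
    ring
  rw [hrw]
  calc |∑ j' : Fin d × Bool, ((c j' : ℤ) - (c j : ℤ))|
      ≤ ∑ j' : Fin d × Bool, |(c j' : ℤ) - (c j : ℤ)| := Finset.abs_sum_le_sum_abs _ _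
    _ ≤ ∑ j' : Fin d × Bool, (if j' = j then (0:ℤ) else 1) := by
        apply Finset.sum_le_sum
        intro j' _
        by_cases hjj : j' = j
        · subst hjj; simp
        · rw [if_neg hjj]
          have h1 := cnt_diff hd (mech x) (hmech x) (r₀ x + 1) j' j m
          have h2 := cnt_diff hd (mech x) (hmech x) (r₀ x + 1) j j' m
          rw [abs_le]
          constructor <;> (simp only [hc]; omega)
    _ = 2 * d - 1 := by
        have hrw2 : ∑ j' : Fin d × Bool, (if j' = j then (0:ℤ) else 1)
            = ∑ j' : Fin d × Bool, ((1:ℤ) - if j' = j then (1:ℤ) else 0) := by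
          apply Finset.sum_congr rfl
          intro j' _
          split <;> ring
        rw [hrw2, Finset.sum_sub_distrib, Finset.sum_const, hcard,
          Finset.sum_ite_eq' Finset.univ j (fun _ => (1:ℤ)), if_pos (Finset.mem_univ j)]
        push_cast
        ring

end Exec
end RotorProofAux


/-- For rotor aggregation with a simple mechanism, the gradient of the odometer along a
directed edge agrees with `2d` times the net crossing number up to an error `≤ 4d − 2`:
`|u(x) − u(y) − 2d·θ(x,y)| ≤ 4d − 2`. -/
theorem odometer_gradient_bound (hd : 0 < d) (hmech : SimpleMech mech)
    (E : RotorExec d n mech r₀) (x : Vd d) (j : Fin d × Bool) :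
    |(E.u x : ℤ) - (E.u (nbr x j) : ℤ) - 2 * d * E.theta x (nbr x j)| ≤ 4 * d - 2 := by
  have h1 := RotorProofAux.one_vertex_bound hd hmech E x j
  have hx : nbr (nbr x j) (j.1, !j.2) = x := RotorProofAux.nbr_nbr x j
  have h2 := RotorProofAux.one_vertex_bound hd hmech E (nbr x j) (j.1, !j.2)
  rw [hx] at h2
  unfold RotorExec.theta
  rw [abs_le] at h1 h2 ⊢
  constructor <;> push_cast at h1 h2 ⊢ <;> linarith [h1.1, h1.2, h2.1, h2.2]
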